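/- If A x = c and B x = d are consistent systems of linear equations over ℝ (each has at least one solution) with the same solution set, then there exists an invertible matrix S such that B = S * A and d = S.mulVec c. -/

import Mathlib

open Matrix LinearMap

theorem affine_equivalence {m n : ℕ} (A B : Matrix (Fin m) (Fin n) ℝ)
    (c d : Fin m → ℝ)
    (hA : ∃ x, A.mulVec x = c) (hB : ∃ x, B.mulVec x = d)
    (hsol : {x : Fin n → ℝ | A.mulVec x = c} = {x : Fin n → ℝ | B.mulVec x = d}) :
    ∃ S : Matrix (Fin m) (Fin m) ℝ, IsUnit S ∧ B = S * A ∧ d = S.mulVec c := by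
  classical
  obtain ⟨x₀, hx₀⟩ := hA
  have hBx₀ : B.mulVec x₀ = d := by
    have hx : x₀ ∈ {x : Fin n → ℝ | A.mulVec x = c} := hx₀
    rw [hsol] at hx
    exact hx
  set f := A.mulVecLin with hf
  set g := B.mulVecLin with hg
  have hfg : ∀ x, f x = 0 ↔ g x = 0 := by
    intro x
    constructor
    · intro h
      have hmem : x + x₀ ∈ {x : Fin n → ℝ | A.mulVec x = c} := by
        have : A.mulVec (x + x₀) = A.mulVec x + A.mulVec x₀ := Matrix.mulVec_add A x x₀
        simp only [Set.mem_setOf_eq, this, hx₀]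
        have hx0 : A.mulVec x = 0 := h
        simp [hx0]
      rw [hsol] at hmem
      have h2 : B.mulVec (x + x₀) = d := hmem
      rw [Matrix.mulVec_add, hBx₀] at h2
      have : B.mulVec x = 0 := by
        have := add_eq_right.mp h2
        exact this
      exact this
    · intro h
      have hmem : x + x₀ ∈ {x : Fin n → ℝ | B.mulVec x = d} := by
        have : B.mulVec (x + x₀) = B.mulVec x + B.mulVec x₀ := Matrix.mulVec_add B x x₀
        have hx0 : B.mulVec x = 0 := h
        simp only [Set.mem_setOf_eq, this, hBx₀, hx0, zero_add]
      rw [← hsol] at hmem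
      have h2 : A.mulVec (x + x₀) = c := hmem
      rw [Matrix.mulVec_add, hx₀] at h2
      exact add_eq_right.mp h2
  have hker : LinearMap.ker f = LinearMap.ker g := by
    ext x
    simpa [LinearMap.mem_ker] using hfg x
  -- equivalence between ranges
  let e : LinearMap.range f ≃ₗ[ℝ] LinearMap.range g :=
    f.quotKerEquivRange.symm ≪≫ₗ
      (Submodule.quotEquivOfEq _ _ hker ≪≫ₗ g.quotKerEquivRange)
  have he : ∀ x : Fin n → ℝ,
      (e ⟨f x, LinearMap.mem_range_self f x⟩ : Fin m → ℝ) = g x := by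
    intro x
    have h1 : f.quotKerEquivRange (Submodule.Quotient.mk x)
        = ⟨f x, LinearMap.mem_range_self f x⟩ :=
      Subtype.ext (f.quotKerEquivRange_apply_mk x)
    have h2 : f.quotKerEquivRange.symm ⟨f x, LinearMap.mem_range_self f x⟩
        = Submodule.Quotient.mk x := by
      rw [← h1, LinearEquiv.symm_apply_apply]
    show ((f.quotKerEquivRange.symm ≪≫ₗ
      (Submodule.quotEquivOfEq _ _ hker ≪≫ₗ g.quotKerEquivRange))
        ⟨f x, LinearMap.mem_range_self f x⟩ : Fin m → ℝ) = g x
    rw [LinearEquiv.trans_apply, h2, LinearEquiv.trans_apply,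
      Submodule.quotEquivOfEq_mk]
    exact g.quotKerEquivRange_apply_mk x
  obtain ⟨p, hp⟩ := Submodule.exists_isCompl (LinearMap.range f)
  obtain ⟨q, hq⟩ := Submodule.exists_isCompl (LinearMap.range g)
  have hpq : Module.finrank ℝ p = Module.finrank ℝ q := by
    have h1 := Submodule.finrank_add_eq_of_isCompl hp
    have h2 := Submodule.finrank_add_eq_of_isCompl hq
    have h3 : Module.finrank ℝ (LinearMap.range f)
        = Module.finrank ℝ (LinearMap.range g) := e.finrank_eq
    omega
  let e' : p ≃ₗ[ℝ] q := LinearEquiv.ofFinrankEq _ _ hpq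
  let φ : (Fin m → ℝ) ≃ₗ[ℝ] (Fin m → ℝ) :=
    (Submodule.prodEquivOfIsCompl _ _ hp).symm ≪≫ₗ
      (e.prodCongr e' ≪≫ₗ Submodule.prodEquivOfIsCompl _ _ hq)
  have hφ : ∀ x : Fin n → ℝ, φ (f x) = g x := by
    intro x
    have h1 : Submodule.prodEquivOfIsCompl _ _ hp
        (⟨f x, LinearMap.mem_range_self f x⟩, 0) = f x := by
      simp [Submodule.coe_prodEquivOfIsCompl']
    have hsym : (Submodule.prodEquivOfIsCompl _ _ hp).symm (f x)
        = (⟨f x, LinearMap.mem_range_self f x⟩, 0) := by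
      rw [LinearEquiv.symm_apply_eq]
      exact h1.symm
    have h2 : φ (f x) = Submodule.prodEquivOfIsCompl _ _ hq
        (e ⟨f x, LinearMap.mem_range_self f x⟩, e' 0) := by
      show (e.prodCongr e' ≪≫ₗ Submodule.prodEquivOfIsCompl _ _ hq)
        ((Submodule.prodEquivOfIsCompl _ _ hp).symm (f x)) = _
      rw [hsym]
      rfl
    rw [h2, map_zero]
    have h3 : Submodule.prodEquivOfIsCompl _ _ hq
        (e ⟨f x, LinearMap.mem_range_self f x⟩, 0)
        = (e ⟨f x, LinearMap.mem_range_self f x⟩ : Fin m → ℝ) := by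
      simp [Submodule.coe_prodEquivOfIsCompl']
    rw [h3, he]
  refine ⟨LinearMap.toMatrix' φ.toLinearMap, ?_, ?_, ?_⟩
  · refine ⟨⟨LinearMap.toMatrix' φ.toLinearMap,
      LinearMap.toMatrix' φ.symm.toLinearMap, ?_, ?_⟩, rfl⟩
    · rw [← LinearMap.toMatrix'_comp]
      simp
    · rw [← LinearMap.toMatrix'_comp]
      simp
  · apply Matrix.toLin'.injective
    refine LinearMap.ext fun x => ?_
    rw [Matrix.toLin'_mul]
    simp only [LinearMap.coe_comp, Function.comp_apply, Matrix.toLin'_apply]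
    have : (LinearMap.toMatrix' φ.toLinearMap).mulVec (A.mulVec x) = φ (A.mulVec x) := by
      rw [← Matrix.toLin'_apply, Matrix.toLin'_toMatrix']
      rfl
    rw [this]
    exact (hφ x).symm
  · have : (LinearMap.toMatrix' φ.toLinearMap).mulVec c = φ c := by
      rw [← Matrix.toLin'_apply, Matrix.toLin'_toMatrix']
      rfl
    rw [this, ← hx₀]
    exact (hφ x₀).symm ▸ hBx₀.symm
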